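/- arXiv:1208.5170 — 2 statements merged into one kernel-verified Lean document; each statement's English description precedes it below -/
import Mathlib

section
/- The double sum $\sum_{k=1}^{\infty} \sum_{i=0}^{k} \frac{k!}{i!} k^{i-k-2}$ equals $-\int_0^{\infty} \log\bigl(1 - (1+x)e^{-x}\bigr)\,dx$, and in particular both sides are finite. -/
open MeasureTheory
open Real Set

-- Lemma A: integrability
lemma integrableOn_pow_exp (n : ℕ) {m : ℝ} (hm : 0 < m) :
    IntegrableOn (fun x : ℝ => x ^ n * Real.exp (-(m * x))) (Set.Ioi 0) := by
  apply integrable_of_isBigO_exp_neg (b := m/2) (half_pos hm)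
  · exact (continuous_pow n |>.mul (continuous_exp.comp (continuous_const.mul continuous_id).neg)).continuousOn
  · have h := isLittleO_pow_exp_pos_mul_atTop n (half_pos hm)
    have h2 := h.isBigO.mul (Asymptotics.isBigO_refl (fun x : ℝ => Real.exp (-(m * x))) Filter.atTop)
    refine h2.congr' (by rfl) ?_
    filter_upwards with x
    rw [← Real.exp_add]
    ring_nf

-- Lemma B: value
lemma integral_pow_exp (n : ℕ) {m : ℝ} (hm : 0 < m) :
    ∫ x in Set.Ioi (0:ℝ), x ^ n * Real.exp (-(m * x)) = n.factorial / m ^ (n + 1) := by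
  have h := Real.integral_rpow_mul_exp_neg_mul_Ioi (a := (n:ℝ) + 1) (by positivity) hm
  rw [show ((n:ℝ) + 1 - 1) = (n:ℝ) by ring] at h
  have heq : ∫ x in Set.Ioi (0:ℝ), x ^ n * Real.exp (-(m * x))
      = ∫ t in Set.Ioi (0:ℝ), t ^ (n:ℝ) * Real.exp (-(m * t)) := by
    refine setIntegral_congr_fun measurableSet_Ioi fun x hx => ?_
    rw [Real.rpow_natCast]
  rw [heq, h]
  rw [show ((n:ℝ)+1) = ((n+1 : ℕ) : ℝ) by push_cast; ring, Real.rpow_natCast]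
  rw [show (((n+1:ℕ)):ℝ) = (n:ℝ)+1 by push_cast; ring, Real.Gamma_nat_eq_factorial,
    div_pow, one_pow]
  ring

-- Lemma C: per-k evaluation
lemma integral_term (m : ℕ) (hm : 0 < m) :
    ∫ x in Set.Ioi (0:ℝ), ((1+x) * Real.exp (-x)) ^ m / m
      = ∑ i ∈ Finset.range (m+1),
          (m.factorial : ℝ) / (i.factorial : ℝ) * (m:ℝ) ^ ((i:ℤ) - m - 2) := by
  have hmR : (0:ℝ) < m := by exact_mod_cast hm
  have hptwise : ∀ x : ℝ, ((1+x) * Real.exp (-x)) ^ m / m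
      = ∑ i ∈ Finset.range (m+1),
          ((m.choose i : ℝ)/m) * (x ^ (m-i) * Real.exp (-((m:ℝ) * x))) := by
    intro x
    rw [mul_pow, add_pow, ← Real.exp_nat_mul]
    rw [Finset.sum_mul, Finset.sum_div]
    refine Finset.sum_congr rfl fun i _ => ?_
    rw [show (m:ℝ) * -x = -((m:ℝ)*x) by ring]
    ring
  rw [setIntegral_congr_fun measurableSet_Ioi (fun x _ => hptwise x)]
  rw [integral_finset_sum _ (fun i _ => (integrableOn_pow_exp (m-i) hmR).const_mul _)]
  refine Finset.sum_congr rfl fun i hi => ?_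
  have hi' : i ≤ m := Nat.lt_succ_iff.mp (Finset.mem_range.mp hi)
  rw [MeasureTheory.integral_const_mul, integral_pow_exp _ hmR]
  have hfac : (m.choose i : ℝ) * ((m-i).factorial) = m.factorial / i.factorial := by
    have := Nat.choose_mul_factorial_mul_factorial hi'
    field_simp
    exact_mod_cast by rw [mul_right_comm]; exact this
  have hexp : (m:ℝ) ^ ((i:ℤ) - m - 2) = ((m:ℝ) ^ ((m-i)+2))⁻¹ := by
    rw [show (i:ℤ) - m - 2 = -(((m-i)+2 : ℕ):ℤ) by push_cast [Nat.cast_sub hi']; ring]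
    rw [zpow_neg, zpow_natCast]
  rw [hexp, div_mul_div_comm, ← hfac,
    show (m-i)+2 = ((m-i)+1)+1 by ring, pow_succ, div_eq_mul_inv, mul_inv]
  ring

lemma t_lt_one {x : ℝ} (hx : 0 < x) : (1+x) * Real.exp (-x) < 1 := by
  have h := Real.add_one_lt_exp (ne_of_gt hx)
  rw [Real.exp_neg, ← div_eq_mul_inv, div_lt_one (Real.exp_pos x)]
  linarith

lemma one_sub_t_ge {x : ℝ} (hx : 0 ≤ x) :
    x^2/2 * Real.exp (-x) ≤ 1 - (1+x) * Real.exp (-x) := by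
  have h := Real.quadratic_le_exp_of_nonneg hx
  have hp := Real.exp_pos x
  rw [Real.exp_neg]
  have hy : Real.exp x * (Real.exp x)⁻¹ = 1 := mul_inv_cancel₀ hp.ne'
  nlinarith [inv_pos.mpr hp, mul_nonneg (sub_nonneg.mpr h) (inv_pos.mpr hp).le]

lemma gmeas : Measurable (fun x : ℝ => Real.log (1 - (1 + x) * Real.exp (-x))) :=
  Real.measurable_log.comp
    (measurable_const.sub ((measurable_const.add measurable_id).mul
      (Real.measurable_exp.comp measurable_id.neg)))

lemma log_integrable :
    IntegrableOn (fun x : ℝ => Real.log (1 - (1 + x) * Real.exp (-x))) (Set.Ioi 0) := by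
  rw [← Set.Ioc_union_Ioi_eq_Ioi (zero_le_one (α := ℝ))]
  refine IntegrableOn.union ?_ ?_
  · -- on Ioc 0 1
    have hbound : IntegrableOn (fun x : ℝ => (Real.log 2 + 1) + 4 * x ^ (-(1/2:ℝ)))
        (Set.Ioc (0:ℝ) 1) := by
      refine ((integrableOn_const_iff).mpr (Or.inr measure_Ioc_lt_top)).add ?_
      exact ((intervalIntegrable_iff_integrableOn_Ioc_of_le zero_le_one).mp
        (intervalIntegral.intervalIntegrable_rpow' (by norm_num))).const_mul 4
    refine Integrable.mono' hbound gmeas.aestronglyMeasurable ?_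
    refine (ae_restrict_iff' measurableSet_Ioc).mpr (Filter.Eventually.of_forall ?_)
    intro x hx
    obtain ⟨hx0, hx1⟩ := hx
    set t := (1+x) * Real.exp (-x) with ht
    have htpos : 0 < t := by positivity
    have ht1 : t < 1 := t_lt_one hx0
    have hq : x^2/2 * Real.exp (-x) ≤ 1 - t := one_sub_t_ge hx0.le
    have h1t : 0 < 1 - t := by linarith
    rw [Real.norm_eq_abs, abs_of_nonpos (Real.log_nonpos (by linarith) (by linarith))]
    -- -log (1-t) ≤ log 2 + x - 2 log x ≤ log 2 + 1 + 4 x^(-1/2)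
    have hlow : Real.log (x^2/2 * Real.exp (-x)) ≤ Real.log (1 - t) :=
      Real.log_le_log (by positivity) hq
    have hexpand : Real.log (x^2/2 * Real.exp (-x)) = 2 * Real.log x - Real.log 2 - x := by
      rw [Real.log_mul (by positivity) (Real.exp_ne_zero _), Real.log_exp,
        Real.log_div (by positivity) (by norm_num), Real.log_pow]
      push_cast; ring
    have hlogx : -Real.log x ≤ 2 * x ^ (-(1/2:ℝ)) := by
      have h2 := Real.log_le_sub_one_of_pos (Real.rpow_pos_of_pos hx0 (-(1/2:ℝ)))
      rw [Real.log_rpow hx0] at h2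
      nlinarith [Real.rpow_pos_of_pos hx0 (-(1/2:ℝ))]
    nlinarith [hlow, hexpand]
  · -- on Ioi 1
    have hbound : IntegrableOn (fun x : ℝ => 4 * ((1+x) * Real.exp (-x)))
        (Set.Ioi (1:ℝ)) := by
      have h0 : IntegrableOn (fun x : ℝ => (1+x) * Real.exp (-x)) (Set.Ioi (0:ℝ)) := by
        have h1 := integrableOn_pow_exp 0 one_pos
        have h2 := integrableOn_pow_exp 1 one_pos
        simp only [pow_zero, pow_one, one_mul] at h1 h2
        refine IntegrableOn.congr_fun (h1.add h2) (fun x _ => ?_) measurableSet_Ioi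
        simp only [Pi.add_apply]; ring
      exact (h0.mono_set (Set.Ioi_subset_Ioi zero_le_one)).const_mul 4
    refine Integrable.mono' hbound gmeas.aestronglyMeasurable ?_
    refine (ae_restrict_iff' measurableSet_Ioi).mpr (Filter.Eventually.of_forall ?_)
    intro x hx
    have hx1 : (1:ℝ) < x := hx
    have hx0 : (0:ℝ) < x := by linarith
    set t := (1+x) * Real.exp (-x) with ht
    have htpos : 0 < t := by positivity
    have ht1 : t < 1 := t_lt_one hx0
    -- t ≤ 3/4 for x ≥ 1
    have ht34 : t ≤ 3/4 := by
      have he : Real.exp 1 * x ≤ Real.exp x := by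
        have := Real.add_one_le_exp (x - 1)
        have h2 : x ≤ Real.exp (x-1) := by linarith
        calc Real.exp 1 * x ≤ Real.exp 1 * Real.exp (x-1) := by
              have := Real.exp_pos 1; nlinarith
          _ = Real.exp x := by rw [← Real.exp_add]; ring_nf
      have he1 : (2.7182818283 : ℝ) < Real.exp 1 := Real.exp_one_gt_d9
      rw [ht, Real.exp_neg, ← div_eq_mul_inv, div_le_iff₀ (Real.exp_pos x)]
      nlinarith
    have h1t : (1:ℝ)/4 ≤ 1 - t := by linarith
    rw [Real.norm_eq_abs, abs_of_nonpos (Real.log_nonpos (by linarith) (by linarith))]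
    have h2 := Real.log_le_sub_one_of_pos (show (0:ℝ) < (1-t)⁻¹ by positivity)
    rw [Real.log_inv] at h2
    -- -log(1-t) ≤ (1-t)⁻¹ - 1 = t/(1-t) ≤ 4t
    have h3 : (1-t)⁻¹ ≤ 4 := by
      rw [inv_le_comm₀ (by linarith) (by norm_num)]
      linarith
    have h4 : (1-t)⁻¹ - 1 ≤ 4 * t := by
      have : (1-t)⁻¹ - 1 = t * (1-t)⁻¹ := by field_simp; ring
      rw [this]
      nlinarith [inv_pos.mpr (show (0:ℝ) < 1-t by linarith)]
    linarith

theorem double_sum_eq_log_integral :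
    IntegrableOn (fun x : ℝ => Real.log (1 - (1 + x) * Real.exp (-x))) (Set.Ioi 0) ∧
    HasSum
      (fun k : ℕ =>
        ∑ i ∈ Finset.range (k + 2),
          ((k + 1).factorial : ℝ) / (i.factorial : ℝ) * ((k : ℝ) + 1) ^ ((i : ℤ) - (k + 1) - 2))
      (-∫ x in Set.Ioi (0:ℝ), Real.log (1 - (1 + x) * Real.exp (-x))) := by
  refine ⟨log_integrable, ?_⟩
  have mT : Measurable (fun x : ℝ => (1 + x) * Real.exp (-x)) :=
    (measurable_const.add measurable_id).mul (Real.measurable_exp.comp measurable_id.neg)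
  have key : HasSum
      (fun k : ℕ => ∫ x in Set.Ioi (0:ℝ), ((1+x) * Real.exp (-x)) ^ (k+1) / ((k:ℝ)+1))
      (∫ x in Set.Ioi (0:ℝ), -Real.log (1 - (1+x) * Real.exp (-x))) := by
    apply MeasureTheory.hasSum_integral_of_dominated_convergence
      (bound := fun (k : ℕ) (x : ℝ) => ((1+x) * Real.exp (-x)) ^ (k+1) / ((k:ℝ)+1))
    · exact fun n => ((mT.pow_const (n+1)).div_const _).aestronglyMeasurable
    · intro n
      refine (ae_restrict_iff' measurableSet_Ioi).mpr (Filter.Eventually.of_forall ?_)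
      intro x hx
      have hx0 : (0:ℝ) < x := hx
      have : (0:ℝ) ≤ ((1+x) * Real.exp (-x)) ^ (n+1) / ((n:ℝ)+1) := by positivity
      rw [Real.norm_eq_abs, abs_of_nonneg this]
    · refine (ae_restrict_iff' measurableSet_Ioi).mpr (Filter.Eventually.of_forall ?_)
      intro x hx
      have hx0 : (0:ℝ) < x := hx
      have habs : |(1+x) * Real.exp (-x)| < 1 := by
        rw [abs_of_nonneg (by positivity)]; exact t_lt_one hx0
      exact (Real.hasSum_pow_div_log_of_abs_lt_one habs).summable
    · refine Integrable.congr log_integrable.neg ?_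
      refine (ae_restrict_iff' measurableSet_Ioi).mpr (Filter.Eventually.of_forall ?_)
      intro x hx
      have hx0 : (0:ℝ) < x := hx
      have habs : |(1+x) * Real.exp (-x)| < 1 := by
        rw [abs_of_nonneg (by positivity)]; exact t_lt_one hx0
      exact ((Real.hasSum_pow_div_log_of_abs_lt_one habs).tsum_eq).symm
    · refine (ae_restrict_iff' measurableSet_Ioi).mpr (Filter.Eventually.of_forall ?_)
      intro x hx
      have hx0 : (0:ℝ) < x := hx
      have habs : |(1+x) * Real.exp (-x)| < 1 := by
        rw [abs_of_nonneg (by positivity)]; exact t_lt_one hx0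
      exact Real.hasSum_pow_div_log_of_abs_lt_one habs
  rw [integral_neg] at key
  have hterm : (fun k : ℕ => ∫ x in Set.Ioi (0:ℝ),
        ((1+x) * Real.exp (-x)) ^ (k+1) / ((k:ℝ)+1))
      = fun k : ℕ => ∑ i ∈ Finset.range (k + 2),
          ((k + 1).factorial : ℝ) / (i.factorial : ℝ) * ((k : ℝ) + 1) ^ ((i : ℤ) - (k + 1) - 2) := by
    funext k
    have h := integral_term (k+1) (Nat.succ_pos k)
    push_cast at h ⊢
    convert h using 2
  rwa [hterm] at key
end

section
/- For integers $m \ge 2$, $j \in \{-1, 0\}$ and $k \ge 100$, the quantity $t_m(k,j) = \sum_{i=0}^{k+j}\bigl(\frac{k+1}{2}+\frac{i-1}{k}\bigr)^m - \sum_{i=0}^{k-1} i^m$ is at most $0$. -/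
private lemma lemA (m n : ℕ) :
    ((n : ℝ) + 1) ^ (m + 1) ≤ (n : ℝ) ^ (m + 1) + (m + 1) * ((n : ℝ) + 1) ^ m := by
  have hp : (0 : ℝ) < (n : ℝ) + 1 := by positivity
  have hd : 1 / ((n:ℝ)+1) ≤ 1 := by
    rw [div_le_one hp]; linarith [Nat.cast_nonneg (α := ℝ) n]
  have h := one_add_mul_le_pow (a := -1 / ((n : ℝ) + 1)) (by
    have he : -1/((n:ℝ)+1) = -(1/((n:ℝ)+1)) := by ring
    have : (0:ℝ) < 1/((n:ℝ)+1) := by positivity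
    rw [he]; linarith) (m + 1)
  have h1 : (1 + -1 / ((n : ℝ) + 1)) = (n : ℝ) / ((n : ℝ) + 1) := by field_simp; ring
  rw [h1, div_pow] at h
  have h2 := mul_le_mul_of_nonneg_right h (le_of_lt (pow_pos hp (m + 1)))
  rw [div_mul_cancel₀ _ (by positivity : ((n:ℝ)+1)^(m+1) ≠ 0)] at h2
  have hps : ((n:ℝ)+1)^(m+1) = ((n:ℝ)+1)^m * ((n:ℝ)+1) := pow_succ _ _
  calc ((n : ℝ) + 1) ^ (m + 1)
      = (1 + (↑(m+1)) * (-1 / ((n : ℝ) + 1))) * ((n:ℝ)+1)^(m+1)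
        + ((m:ℝ)+1) * ((n:ℝ)+1)^m := by
        rw [hps]; push_cast; field_simp; ring
    _ ≤ (n : ℝ) ^ (m + 1) + (m + 1) * ((n : ℝ) + 1) ^ m :=
        add_le_add_left h2 _

private lemma lemB (m n : ℕ) :
    ((n : ℝ)) ^ (m + 1) ≤ ((m : ℝ) + 1) * ∑ i ∈ Finset.range (n + 1), (i : ℝ) ^ m := by
  induction n with
  | zero =>
      simp [zero_pow (Nat.succ_ne_zero m)]
      positivity
  | succ n ih =>
      rw [Finset.sum_range_succ, mul_add]
      have h := lemA m n
      push_cast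
      push_cast at ih h
      nlinarith [h, ih]

private lemma lemC (m : ℕ) (hm : 2 ≤ m) :
    (101 / 99 : ℝ) * ((m : ℝ) + 1) ≤ (19 / 10 : ℝ) ^ m := by
  induction m, hm using Nat.le_induction with
  | base => norm_num
  | succ n hn ih =>
      rw [pow_succ]
      push_cast
      push_cast at ih
      have hn' : (2:ℝ) ≤ n := by exact_mod_cast hn
      linarith [ih, hn']

theorem t_m_nonpos (m k : ℕ) (j : ℤ) (hm : 2 ≤ m) (hj : j = -1 ∨ j = 0) (hk : 100 ≤ k) :
    (∑ i ∈ Finset.range (((k : ℤ) + j).toNat + 1),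
        (((k : ℝ) + 1) / 2 + ((i : ℝ) - 1) / k) ^ m) - ∑ i ∈ Finset.range k, (i : ℝ) ^ m
      ≤ 0 := by
  have hk100 : (100 : ℝ) ≤ (k : ℝ) := by exact_mod_cast hk
  have hk0 : (0 : ℝ) < k := by linarith
  set N : ℕ := ((k : ℤ) + j).toNat + 1 with hNdef
  have hN : N ≤ k + 1 := by
    rcases hj with h | h <;> subst h <;> simp [hNdef] <;> omega
  -- upper bound on each term
  have hterm : ∀ i ∈ Finset.range N,
      (((k : ℝ) + 1) / 2 + ((i : ℝ) - 1) / k) ^ m ≤ (((k : ℝ) + 3) / 2) ^ m := by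
    intro i hi
    have hik : i ≤ k := by
      have := Finset.mem_range.mp hi; omega
    have hikR : (i : ℝ) ≤ k := by exact_mod_cast hik
    have hi0 : (0 : ℝ) ≤ i := Nat.cast_nonneg i
    apply pow_le_pow_left₀
    · have h1 : (-1 : ℝ) ≤ ((i : ℝ) - 1) / k := by
        rw [le_div_iff₀ hk0]; nlinarith
      linarith
    · have h2 : ((i : ℝ) - 1) / k ≤ 1 := by
        rw [div_le_one hk0]; linarith
      linarith
  have hupper : (∑ i ∈ Finset.range N,
      (((k : ℝ) + 1) / 2 + ((i : ℝ) - 1) / k) ^ m) ≤ ((k : ℝ) + 1) * (((k : ℝ) + 3) / 2) ^ m := by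
    calc (∑ i ∈ Finset.range N, (((k : ℝ) + 1) / 2 + ((i : ℝ) - 1) / k) ^ m)
        ≤ ∑ _i ∈ Finset.range N, (((k : ℝ) + 3) / 2) ^ m := Finset.sum_le_sum hterm
      _ = (N : ℝ) * (((k : ℝ) + 3) / 2) ^ m := by
          rw [Finset.sum_const, Finset.card_range, nsmul_eq_mul]
      _ ≤ ((k : ℝ) + 1) * (((k : ℝ) + 3) / 2) ^ m := by
          apply mul_le_mul_of_nonneg_right _ (by positivity)
          have : (N : ℝ) ≤ (k : ℝ) + 1 := by exact_mod_cast hN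
          exact this
  -- lower bound on the second sum
  have hkeq : k = (k - 1) + 1 := by omega
  have hlower : ((k : ℝ) - 1) ^ (m + 1) ≤ ((m : ℝ) + 1) * ∑ i ∈ Finset.range k, (i : ℝ) ^ m := by
    have := lemB m (k - 1)
    rw [← hkeq] at this
    have hc : ((k - 1 : ℕ) : ℝ) = (k : ℝ) - 1 := by
      have : (1:ℕ) ≤ k := by omega
      push_cast [this]; ring
    rwa [hc] at this
  -- the key comparison
  have hm1 : (0 : ℝ) < (m : ℝ) + 1 := by positivity
  have hkey : ((m : ℝ) + 1) * (((k : ℝ) + 1) * (((k : ℝ) + 3) / 2) ^ m)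
      ≤ ((k : ℝ) - 1) ^ (m + 1) := by
    have hC : (0 : ℝ) ≤ ((k : ℝ) + 3) / 2 := by linarith
    have h19 : (19 / 10 : ℝ) * (((k : ℝ) + 3) / 2) ≤ (k : ℝ) - 1 := by linarith
    have hpow : ((19 / 10 : ℝ) * (((k : ℝ) + 3) / 2)) ^ m ≤ ((k : ℝ) - 1) ^ m :=
      pow_le_pow_left₀ (by positivity) h19 m
    rw [mul_pow] at hpow
    have hC2 := lemC m hm
    have hCm : (0 : ℝ) ≤ (((k : ℝ) + 3) / 2) ^ m := by positivity
    calc ((m : ℝ) + 1) * (((k : ℝ) + 1) * (((k : ℝ) + 3) / 2) ^ m)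
        ≤ ((101 / 99 : ℝ) * ((m : ℝ) + 1)) * (((k : ℝ) - 1) * (((k : ℝ) + 3) / 2) ^ m) := by
          have h1 : ((m:ℝ)+1) * ((k:ℝ)+1) ≤ ((101/99:ℝ) * ((m:ℝ)+1)) * ((k:ℝ)-1) := by
            nlinarith
          nlinarith [mul_le_mul_of_nonneg_right h1 hCm]
      _ ≤ (19 / 10 : ℝ) ^ m * (((k : ℝ) - 1) * (((k : ℝ) + 3) / 2) ^ m) := by
          apply mul_le_mul_of_nonneg_right hC2
          nlinarith
      _ = ((19 / 10 : ℝ) ^ m * (((k : ℝ) + 3) / 2) ^ m) * ((k : ℝ) - 1) := by ring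
      _ ≤ ((k : ℝ) - 1) ^ m * ((k : ℝ) - 1) :=
          mul_le_mul_of_nonneg_right hpow (by linarith)
      _ = ((k : ℝ) - 1) ^ (m + 1) := (pow_succ _ _).symm
  have hfinal : ((k : ℝ) + 1) * (((k : ℝ) + 3) / 2) ^ m ≤ ∑ i ∈ Finset.range k, (i : ℝ) ^ m := by
    have := hkey.trans hlower
    exact le_of_mul_le_mul_left this hm1
  linarith [hupper, hfinal]
end
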